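/- Quantitative Borel–Cantelli lemma: let (X, μ) be a probability space and (E_n)_{n≥1} a sequence of measurable sets. For x ∈ X and N ≥ 1 let A(N,x) = #{n ≤ N : x ∈ E_n}, and let Φ(N) = Σ_{n≤N} μ(E_n). Suppose there exist nonnegative reals C_k with Σ_{k≥1} C_k < ∞ such that μ(E_n ∩ E_m) ≤ μ(E_n)μ(E_m) + μ(E_n)·C_{n−m} for all integers n > m ≥ 1. Then for every ε > 0 and μ-almost every x ∈ X, there is a constant K = K(x) such that |A(N,x) − Φ(N)| ≤ K·(Φ(N)^{1/2}·(log(Φ(N)+2))^{3/2+ε} + 1) for all N ≥ 1. -/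

import Mathlib

open MeasureTheory

set_option linter.unusedSectionVars false
set_option maxHeartbeats 1600000

open MeasureTheory Filter
open scoped ENNReal

namespace QBCaux

variable {X : Type*} [MeasurableSpace X] (μ : Measure X) [IsProbabilityMeasure μ]
variable (E : ℕ → Set X)

noncomputable def aa (n : ℕ) : ℝ := (μ (E n)).toReal

noncomputable def Phi (N : ℕ) : ℝ := ∑ n ∈ Finset.Icc 1 N, aa μ E n

noncomputable def gg (n : ℕ) (x : X) : ℝ := (E n).indicator 1 x - aa μ E n

noncomputable def DD (m n : ℕ) (x : X) : ℝ := ∑ i ∈ Finset.Ioc m n, gg μ E i x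

lemma aa_nonneg (n : ℕ) : 0 ≤ aa μ E n := ENNReal.toReal_nonneg

lemma aa_le_one (n : ℕ) : aa μ E n ≤ 1 := by
  have h : μ (E n) ≤ 1 := prob_le_one
  have := ENNReal.toReal_mono (by norm_num) h
  simpa [aa] using this

lemma Phi_nonneg (N : ℕ) : 0 ≤ Phi μ E N :=
  Finset.sum_nonneg fun i _ => aa_nonneg μ E i

lemma Phi_mono : Monotone (Phi μ E) := by
  intro p q hpq
  exact Finset.sum_le_sum_of_subset_of_nonneg
    (Finset.Icc_subset_Icc le_rfl hpq) (fun i _ _ => aa_nonneg μ E i)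

lemma Phi_eq_Ioc (N : ℕ) : Phi μ E N = ∑ n ∈ Finset.Ioc 0 N, aa μ E n := by
  rw [Phi, ← Finset.Icc_add_one_left_eq_Ioc, zero_add]

lemma Phi_diff {p q : ℕ} (h : p ≤ q) :
    ∑ i ∈ Finset.Ioc p q, aa μ E i = Phi μ E q - Phi μ E p := by
  have := Finset.sum_Ioc_consecutive (aa μ E) (Nat.zero_le p) h
  rw [Phi_eq_Ioc, Phi_eq_Ioc, ← this]
  ring

lemma Phi_succ (m : ℕ) : Phi μ E (m + 1) = Phi μ E m + aa μ E (m + 1) := by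
  rw [Phi, Phi, Finset.sum_Icc_succ_top (Nat.succ_le_succ (Nat.zero_le m))]

lemma ind_meas (hE : ∀ n, MeasurableSet (E n)) (n : ℕ) :
    Measurable ((E n).indicator (1 : X → ℝ)) :=
  measurable_one.indicator (hE n)

lemma ind_int (hE : ∀ n, MeasurableSet (E n)) (n : ℕ) :
    Integrable ((E n).indicator (1 : X → ℝ)) μ := by
  have : Integrable ((E n).indicator (fun _ => (1:ℝ))) μ :=
    (integrable_const (1:ℝ)).indicator (hE n)
  simpa [Pi.one_def] using this

lemma ind_nonneg (n : ℕ) (x : X) : 0 ≤ (E n).indicator (1 : X → ℝ) x :=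
  Set.indicator_nonneg (fun _ _ => zero_le_one) x

lemma ind_le_one (n : ℕ) (x : X) : (E n).indicator (1 : X → ℝ) x ≤ 1 := by
  classical
  rw [Set.indicator_apply]
  split <;> norm_num

lemma gg_meas (hE : ∀ n, MeasurableSet (E n)) (n : ℕ) : Measurable (gg μ E n) :=
  (ind_meas E hE n).sub measurable_const

lemma gg_int (hE : ∀ n, MeasurableSet (E n)) (n : ℕ) : Integrable (gg μ E n) μ :=
  (ind_int μ E hE n).sub (integrable_const _)

lemma gg_abs_le_one (n : ℕ) (x : X) : |gg μ E n x| ≤ 1 := by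
  rw [gg, abs_le]
  constructor
  · have := aa_le_one μ E n
    have := ind_nonneg E n x
    linarith
  · have := aa_nonneg μ E n
    have := ind_le_one E n x
    linarith

lemma integral_ind (hE : ∀ n, MeasurableSet (E n)) (n : ℕ) :
    ∫ x, (E n).indicator (1 : X → ℝ) x ∂μ = aa μ E n :=
  integral_indicator_one (hE n)

lemma gg_mul_int (hE : ∀ n, MeasurableSet (E n)) (n m : ℕ) :
    Integrable (fun x => gg μ E n x * gg μ E m x) μ :=
  (gg_int μ E hE m).bdd_mul (gg_meas μ E hE n).aestronglyMeasurable
    (c := 1) (ae_of_all _ fun x => by simpa using gg_abs_le_one μ E n x)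

lemma integral_ind_mul (hE : ∀ n, MeasurableSet (E n)) (n m : ℕ) :
    ∫ x, (E n).indicator (1 : X → ℝ) x * (E m).indicator (1 : X → ℝ) x ∂μ
      = (μ (E n ∩ E m)).toReal := by
  have h : ∀ x, (E n ∩ E m).indicator (1 : X → ℝ) x
      = (E n).indicator (1 : X → ℝ) x * (E m).indicator (1 : X → ℝ) x := by
    intro x
    rw [Set.inter_indicator_one]
    rfl
  rw [← integral_congr_ae (Eventually.of_forall h)]
  exact integral_indicator_one ((hE n).inter (hE m))

lemma integral_gg_mul (hE : ∀ n, MeasurableSet (E n)) (n m : ℕ) :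
    ∫ x, gg μ E n x * gg μ E m x ∂μ
      = (μ (E n ∩ E m)).toReal - aa μ E n * aa μ E m := by
  have hfm := ind_int μ E hE m
  have hfn := ind_int μ E hE n
  have hprod : Integrable (fun x => (E n).indicator (1 : X → ℝ) x *
      (E m).indicator (1 : X → ℝ) x) μ :=
    hfm.bdd_mul (ind_meas E hE n).aestronglyMeasurable
      (c := 1) (ae_of_all _ fun x => by simpa [abs_of_nonneg (ind_nonneg E n x)] using ind_le_one E n x)
  have key : ∀ x, gg μ E n x * gg μ E m x
      = (E n).indicator (1 : X → ℝ) x * (E m).indicator (1 : X → ℝ) x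
        - aa μ E n * (E m).indicator (1 : X → ℝ) x
        - aa μ E m * (E n).indicator (1 : X → ℝ) x
        + aa μ E n * aa μ E m := by
    intro x; rw [gg, gg]; ring
  rw [integral_congr_ae (Eventually.of_forall key)]
  rw [integral_add, integral_sub, integral_sub, integral_const_mul, integral_const_mul,
    integral_ind μ E hE, integral_ind μ E hE, integral_ind_mul μ E hE, integral_const]
  · simp; ring
  · exact hprod
  · exact hfm.const_mul _
  · exact (hprod.sub (hfm.const_mul _))
  · exact hfn.const_mul _
  · exact ((hprod.sub (hfm.const_mul _)).sub (hfn.const_mul _))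
  · exact integrable_const _


lemma DD_int (hE : ∀ n, MeasurableSet (E n)) (m n : ℕ) : Integrable (DD μ E m n) μ :=
  integrable_finset_sum _ fun i _ => gg_int μ E hE i

lemma DD_meas (hE : ∀ n, MeasurableSet (E n)) (m n : ℕ) : Measurable (DD μ E m n) :=
  Finset.measurable_sum _ fun i _ => gg_meas μ E hE i

lemma DD_abs_le (m n : ℕ) (x : X) : |DD μ E m n x| ≤ (Finset.Ioc m n).card := by
  calc |DD μ E m n x| ≤ ∑ i ∈ Finset.Ioc m n, |gg μ E i x| :=
        Finset.abs_sum_le_sum_abs _ _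
    _ ≤ ∑ _i ∈ Finset.Ioc m n, (1:ℝ) :=
        Finset.sum_le_sum fun i _ => gg_abs_le_one μ E i x
    _ = (Finset.Ioc m n).card := by simp

lemma DDsq_int (hE : ∀ n, MeasurableSet (E n)) (m n : ℕ) :
    Integrable (fun x => DD μ E m n x ^ 2) μ := by
  have : Integrable (fun x => DD μ E m n x * DD μ E m n x) μ :=
    (DD_int μ E hE m n).bdd_mul (DD_meas μ E hE m n).aestronglyMeasurable
      (c := (Finset.Ioc m n).card) (ae_of_all _ fun x => by simpa using DD_abs_le μ E m n x)
  simpa [pow_two] using this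

/-- bound for the off-diagonal correlation sum -/
lemma Cb_sum_le (C : ℕ → ℝ) (hC0 : ∀ k, 0 ≤ C k) (hCsum : Summable C)
    (s : Finset ℕ) (i : ℕ) :
    ∑ j ∈ s, (if i - j = 0 then 0 else C (i - j)) ≤ ∑' k, C k := by
  classical
  set Cb : ℕ → ℝ := fun k => if k = 0 then 0 else C k with hCb
  have h1 : ∑ j ∈ s, Cb (i - j) = ∑ j ∈ s.filter (· < i), Cb (i - j) := by
    rw [Finset.sum_filter_of_ne]
    intro j hj hne
    by_contra hlt
    have : i - j = 0 := by omega
    simp [hCb, this] at hne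
  have h2 : ∑ j ∈ s.filter (· < i), Cb (i - j)
      = ∑ k ∈ (s.filter (· < i)).image (fun j => i - j), Cb k := by
    rw [Finset.sum_image]
    intro x hx y hy hxy
    have hx' : x < i := (Finset.mem_filter.mp hx).2
    have hy' : y < i := (Finset.mem_filter.mp hy).2
    simp only at hxy
    omega
  have h3 : ∑ k ∈ (s.filter (· < i)).image (fun j => i - j), Cb k
      ≤ ∑ k ∈ (s.filter (· < i)).image (fun j => i - j), C k := by
    apply Finset.sum_le_sum
    intro k _
    by_cases h : k = 0 <;> simp [hCb, h, hC0 k, hC0 0]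
  have h4 : ∑ k ∈ (s.filter (· < i)).image (fun j => i - j), C k ≤ ∑' k, C k :=
    Summable.sum_le_tsum _ (fun k _ => hC0 k) hCsum
  calc ∑ j ∈ s, (if i - j = 0 then 0 else C (i - j))
      = ∑ j ∈ s, Cb (i - j) := by simp [hCb]
    _ ≤ ∑' k, C k := by rw [h1, h2]; exact le_trans h3 h4

lemma var_bound (hE : ∀ n, MeasurableSet (E n))
    (C : ℕ → ℝ) (hC0 : ∀ k, 0 ≤ C k) (hCsum : Summable C)
    (hcorr : ∀ m n : ℕ, 1 ≤ m → m < n →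
      (μ (E n ∩ E m)).toReal ≤
        (μ (E n)).toReal * (μ (E m)).toReal + (μ (E n)).toReal * C (n - m))
    (m n : ℕ) :
    ∫ x, DD μ E m n x ^ 2 ∂μ
      ≤ (1 + 2 * ∑' k, C k) * ∑ i ∈ Finset.Ioc m n, aa μ E i := by
  classical
  set s := Finset.Ioc m n with hs
  set T := ∑' k, C k with hT
  have hT0 : 0 ≤ T := tsum_nonneg hC0
  have expand : ∀ x, DD μ E m n x ^ 2 = ∑ i ∈ s, ∑ j ∈ s, gg μ E i x * gg μ E j x := by
    intro x
    rw [DD, pow_two, Finset.sum_mul_sum]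
  have hint : ∫ x, DD μ E m n x ^ 2 ∂μ
      = ∑ i ∈ s, ∑ j ∈ s, ((μ (E i ∩ E j)).toReal - aa μ E i * aa μ E j) := by
    rw [integral_congr_ae (Eventually.of_forall expand)]
    rw [integral_finset_sum _ (fun i _ => integrable_finset_sum _
      (fun j _ => gg_mul_int μ E hE i j))]
    exact Finset.sum_congr rfl fun i _ => by
      rw [integral_finset_sum _ (fun j _ => gg_mul_int μ E hE i j)]
      exact Finset.sum_congr rfl fun j _ => integral_gg_mul μ E hE i j
  rw [hint]
  -- the per-pair bound
  have pair : ∀ i ∈ s, ∀ j ∈ s,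
      (μ (E i ∩ E j)).toReal - aa μ E i * aa μ E j
        ≤ (if i = j then aa μ E i else 0)
          + aa μ E i * (if i - j = 0 then 0 else C (i - j))
          + aa μ E j * (if j - i = 0 then 0 else C (j - i)) := by
    intro i hi j hj
    have hi1 : 1 ≤ i := by
      have := Finset.mem_Ioc.mp (hs ▸ hi); omega
    have hj1 : 1 ≤ j := by
      have := Finset.mem_Ioc.mp (hs ▸ hj); omega
    simp only [aa]
    rcases lt_trichotomy i j with hlt | heq | hgt
    · have hcor := hcorr i j hi1 hlt
      rw [Set.inter_comm, if_neg (show ¬ i = j by omega),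
        if_pos (show i - j = 0 by omega), if_neg (show ¬ j - i = 0 by omega)]
      nlinarith [hcor]
    · subst heq
      rw [Set.inter_self, if_pos rfl]
      norm_num
      nlinarith [ENNReal.toReal_nonneg (a := μ (E i))]
    · have hcor := hcorr j i hj1 hgt
      rw [if_neg (show ¬ i = j by omega),
        if_neg (show ¬ i - j = 0 by omega), if_pos (show j - i = 0 by omega)]
      nlinarith [hcor]
  have step1 : ∑ i ∈ s, ∑ j ∈ s, ((μ (E i ∩ E j)).toReal - aa μ E i * aa μ E j)
      ≤ ∑ i ∈ s, ∑ j ∈ s, ((if i = j then aa μ E i else 0)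
          + aa μ E i * (if i - j = 0 then 0 else C (i - j))
          + aa μ E j * (if j - i = 0 then 0 else C (j - i))) :=
    Finset.sum_le_sum fun i hi => Finset.sum_le_sum fun j hj => pair i hi j hj
  refine le_trans step1 ?_
  have split : ∑ i ∈ s, ∑ j ∈ s, ((if i = j then aa μ E i else 0)
          + aa μ E i * (if i - j = 0 then 0 else C (i - j))
          + aa μ E j * (if j - i = 0 then 0 else C (j - i)))
      = (∑ i ∈ s, ∑ j ∈ s, (if i = j then aa μ E i else 0))
        + (∑ i ∈ s, ∑ j ∈ s, aa μ E i * (if i - j = 0 then 0 else C (i - j)))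
        + (∑ i ∈ s, ∑ j ∈ s, aa μ E j * (if j - i = 0 then 0 else C (j - i))) := by
    simp [Finset.sum_add_distrib]
  rw [split]
  have t1 : ∑ i ∈ s, ∑ j ∈ s, (if i = j then aa μ E i else 0) = ∑ i ∈ s, aa μ E i := by
    apply Finset.sum_congr rfl
    intro i hi
    simp [Finset.sum_ite_eq s i (fun _ => aa μ E i), hi]
  have t2 : ∀ i ∈ s, ∑ j ∈ s, aa μ E i * (if i - j = 0 then 0 else C (i - j))
      ≤ aa μ E i * T := by
    intro i _
    rw [← Finset.mul_sum]
    exact mul_le_mul_of_nonneg_left (Cb_sum_le C hC0 hCsum s i) (aa_nonneg μ E i)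
  have t3 : ∑ i ∈ s, ∑ j ∈ s, aa μ E j * (if j - i = 0 then 0 else C (j - i))
      = ∑ j ∈ s, ∑ i ∈ s, aa μ E j * (if j - i = 0 then 0 else C (j - i)) :=
    Finset.sum_comm
  calc (∑ i ∈ s, ∑ j ∈ s, (if i = j then aa μ E i else 0))
        + (∑ i ∈ s, ∑ j ∈ s, aa μ E i * (if i - j = 0 then 0 else C (i - j)))
        + (∑ i ∈ s, ∑ j ∈ s, aa μ E j * (if j - i = 0 then 0 else C (j - i)))
      ≤ (∑ i ∈ s, aa μ E i) + (∑ i ∈ s, aa μ E i * T) + (∑ j ∈ s, aa μ E j * T) := by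
        rw [t1, t3]
        exact add_le_add (add_le_add le_rfl (Finset.sum_le_sum t2)) (Finset.sum_le_sum t2)
    _ = (1 + 2 * T) * ∑ i ∈ s, aa μ E i := by
        rw [← Finset.sum_add_distrib, ← Finset.sum_add_distrib, Finset.mul_sum]
        exact Finset.sum_congr rfl fun i _ => by ring


lemma ncard_eq (x : X) (N : ℕ) :
    ({n : ℕ | 1 ≤ n ∧ n ≤ N ∧ x ∈ E n}.ncard : ℝ)
      = ∑ n ∈ Finset.Icc 1 N, (E n).indicator (1 : X → ℝ) x := by
  classical
  have h : {n : ℕ | 1 ≤ n ∧ n ≤ N ∧ x ∈ E n}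
      = ↑((Finset.Icc 1 N).filter fun n => x ∈ E n) := by
    ext n
    simp [Finset.mem_Icc, and_assoc]
  rw [h, Set.ncard_coe_finset, Finset.card_filter]
  push_cast
  refine Finset.sum_congr rfl fun n _ => ?_
  rw [Set.indicator_apply]
  split <;> simp

lemma Ioc_zero_eq_Icc (N : ℕ) : Finset.Ioc 0 N = Finset.Icc 1 N :=
  (Finset.Icc_add_one_left_eq_Ioc 0 N).symm

lemma final_arith (ε : ℝ) (hε : 0 < ε) (s j : ℕ) (Φ : ℝ)
    (hj1 : 1 ≤ j) (hjΦ : (j:ℝ) ≤ Φ)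
    (hs2 : (2:ℝ)^s ≤ 2*(j:ℝ)) :
    Real.sqrt (((s:ℝ)+1) * (((s:ℝ)+1)^(2+2*ε : ℝ) * 2^s)) + 2
      ≤ (2 * (4 / Real.log 2)^((3:ℝ)/2+ε) + 2) *
          (Φ^((1:ℝ)/2) * Real.log (Φ+2)^((3:ℝ)/2+ε) + 1) := by
  have hΦ1 : (1:ℝ) ≤ Φ := le_trans (by exact_mod_cast hj1) hjΦ
  have hlog2 : 0 < Real.log 2 := Real.log_pos one_lt_two
  set L := Real.log (Φ+2) with hLdef
  have hL : Real.log 2 ≤ L := Real.log_le_log (by norm_num) (by linarith)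
  have hL0 : 0 < L := lt_of_lt_of_le hlog2 hL
  set p := (3:ℝ)/2 + ε with hpdef
  have hp : 0 < p := by rw [hpdef]; linarith
  have hA0 : (0:ℝ) < (s:ℝ)+1 := by positivity
  -- step A : s+1 ≤ (4/log2) * L
  have hsL : (s:ℝ)+1 ≤ (4/Real.log 2) * L := by
    have h2s : (2:ℝ)^s ≤ 2*Φ := le_trans hs2 (by linarith)
    have hlog1 : (s:ℝ) * Real.log 2 ≤ Real.log (2*Φ) := by
      rw [← Real.log_pow]
      exact Real.log_le_log (by positivity) h2s
    have hlog2Φ : Real.log (2*Φ) = Real.log 2 + Real.log Φ :=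
      Real.log_mul (by norm_num) (by linarith)
    have hΦL : Real.log Φ ≤ L := Real.log_le_log (by linarith) (by linarith)
    have h1 : ((s:ℝ)+1) * Real.log 2 ≤ 4 * L := by nlinarith
    calc (s:ℝ)+1 = ((s:ℝ)+1) * Real.log 2 / Real.log 2 := by field_simp
      _ ≤ 4*L / Real.log 2 := by gcongr
      _ = (4/Real.log 2) * L := by ring
  -- combine the powers of (s+1)
  have key1 : ((s:ℝ)+1) * (((s:ℝ)+1)^(2+2*ε:ℝ) * 2^s) = ((s:ℝ)+1)^(3+2*ε:ℝ) * 2^s := by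
    have := (Real.rpow_add hA0 1 (2+2*ε)).symm
    rw [Real.rpow_one] at this
    rw [← mul_assoc, this, show (1+(2+2*ε)) = 3+2*ε by ring]
  rw [key1]
  have hsq : Real.sqrt (((s:ℝ)+1)^(3+2*ε:ℝ) * 2^s)
      = ((s:ℝ)+1)^p * Real.sqrt ((2:ℝ)^s) := by
    rw [Real.sqrt_mul (by positivity)]
    congr 1
    rw [Real.sqrt_eq_rpow, ← Real.rpow_mul (le_of_lt hA0)]
    congr 1
    rw [hpdef]; ring
  rw [hsq]
  have hb : Real.sqrt ((2:ℝ)^s) ≤ 2 * Φ^((1:ℝ)/2) := by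
    have h1 : Real.sqrt ((2:ℝ)^s) ≤ Real.sqrt (4*Φ) :=
      Real.sqrt_le_sqrt (by nlinarith)
    have h2 : Real.sqrt (4*Φ) = 2 * Real.sqrt Φ := by
      rw [Real.sqrt_mul (by norm_num : (0:ℝ) ≤ 4)]
      congr 1
      rw [show (4:ℝ) = 2^2 by norm_num, Real.sqrt_sq (by norm_num : (0:ℝ) ≤ 2)]
    rw [← Real.sqrt_eq_rpow]
    linarith [h1, h2.le, h2.ge]
  have ha : ((s:ℝ)+1)^p ≤ (4/Real.log 2)^p * L^p := by
    rw [← Real.mul_rpow (by positivity) (le_of_lt hL0)]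
    exact Real.rpow_le_rpow (le_of_lt hA0) hsL (le_of_lt hp)
  have hc0 : (0:ℝ) ≤ (4/Real.log 2)^p := by positivity
  have hs1p : (0:ℝ) ≤ ((s:ℝ)+1)^p := by positivity
  have hT0 : (0:ℝ) ≤ Φ^((1:ℝ)/2) * L^p := by positivity
  have hLp0 : (0:ℝ) ≤ L^p := by positivity
  have hΦ120 : (0:ℝ) ≤ Φ^((1:ℝ)/2) := by positivity
  have hmain : ((s:ℝ)+1)^p * Real.sqrt ((2:ℝ)^s)
      ≤ 2 * (4/Real.log 2)^p * (Φ^((1:ℝ)/2) * L^p) := by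
    calc ((s:ℝ)+1)^p * Real.sqrt ((2:ℝ)^s)
        ≤ ((4/Real.log 2)^p * L^p) * (2 * Φ^((1:ℝ)/2)) := by
          apply mul_le_mul ha hb (Real.sqrt_nonneg _) (by positivity)
      _ = 2 * (4/Real.log 2)^p * (Φ^((1:ℝ)/2) * L^p) := by ring
  nlinarith [hmain, hT0, hc0]


end QBCaux

/-- Quantitative Borel–Cantelli lemma, Philipp. Let `(X, μ)` be a
probability space and `(E_n)_{n≥1}` measurable sets. With `A(N,x) = #{n ≤ N : x ∈ E_n}` and
`Φ(N) = Σ_{n≤N} μ(E_n)`, if there are nonnegative `C_k` with `Σ C_k < ∞` and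
`μ(E_n ∩ E_m) ≤ μ(E_n)μ(E_m) + μ(E_n) C_{n−m}` for all `n > m ≥ 1`, then for every `ε > 0`
and μ-a.e. `x` there is `K = K(x)` with
`|A(N,x) − Φ(N)| ≤ K (Φ(N)^{1/2} (log(Φ(N)+2))^{3/2+ε} + 1)` for all `N ≥ 1`. -/
theorem quantitative_borel_cantelli
    {X : Type*} [MeasurableSpace X] (μ : Measure X) [IsProbabilityMeasure μ]
    (E : ℕ → Set X) (hE : ∀ n, MeasurableSet (E n))
    (C : ℕ → ℝ) (hC0 : ∀ k, 0 ≤ C k) (hCsum : Summable C)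
    (hcorr : ∀ m n : ℕ, 1 ≤ m → m < n →
      (μ (E n ∩ E m)).toReal ≤
        (μ (E n)).toReal * (μ (E m)).toReal + (μ (E n)).toReal * C (n - m))
    (ε : ℝ) (hε : 0 < ε) :
    ∀ᵐ x ∂μ, ∃ K : ℝ, ∀ N : ℕ, 1 ≤ N →
      |({n : ℕ | 1 ≤ n ∧ n ≤ N ∧ x ∈ E n}.ncard : ℝ) -
          ∑ n ∈ Finset.Icc 1 N, (μ (E n)).toReal| ≤
        K * ((∑ n ∈ Finset.Icc 1 N, (μ (E n)).toReal) ^ ((1 : ℝ) / 2) *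
          Real.log ((∑ n ∈ Finset.Icc 1 N, (μ (E n)).toReal) + 2) ^ ((3 : ℝ) / 2 + ε) + 1) := by
  classical
  have hphi_eq : ∀ N, ∑ n ∈ Finset.Icc 1 N, (μ (E n)).toReal = QBCaux.Phi μ E N :=
    fun N => rfl
  set SS : ℕ → X → ℝ := fun N x => ∑ n ∈ Finset.Icc 1 N, (E n).indicator (1 : X → ℝ) x
    with hSSdef
  have hSSmono : ∀ x ⦃p q : ℕ⦄, p ≤ q → SS p x ≤ SS q x := by
    intro x p q hpq
    exact Finset.sum_le_sum_of_subset_of_nonneg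
      (Finset.Icc_subset_Icc le_rfl hpq) (fun i _ _ => QBCaux.ind_nonneg E i x)
  have hSSnonneg : ∀ x N, 0 ≤ SS N x :=
    fun x N => Finset.sum_nonneg fun i _ => QBCaux.ind_nonneg E i x
  have hDD0 : ∀ x N, QBCaux.DD μ E 0 N x = SS N x - QBCaux.Phi μ E N := by
    intro x N
    rw [QBCaux.DD, QBCaux.Ioc_zero_eq_Icc, hSSdef, QBCaux.Phi, ← Finset.sum_sub_distrib]
    rfl
  by_cases hbdd : ∀ j : ℕ, ∃ N : ℕ, (j : ℝ) ≤ QBCaux.Phi μ E N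
  case neg =>
    -- bounded case: Φ is bounded, a.e. point is in only finitely many Eₙ
    push_neg at hbdd
    obtain ⟨j, hj⟩ := hbdd
    have hIocne : ∀ n : ℕ, (∑ i ∈ Finset.Ioc 0 n, μ (E i)) ≠ ∞ :=
      fun n => (ENNReal.sum_lt_top.mpr fun i _ => measure_lt_top μ _).ne
    have hIoc_le : ∀ n : ℕ, (∑ i ∈ Finset.Ioc 0 n, μ (E i)) ≤ ENNReal.ofReal j := by
      intro n
      have h1 : (∑ i ∈ Finset.Ioc 0 n, μ (E i)).toReal = QBCaux.Phi μ E n := by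
        rw [ENNReal.toReal_sum (fun i _ => (measure_lt_top μ _).ne), QBCaux.Phi_eq_Ioc]
        rfl
      calc (∑ i ∈ Finset.Ioc 0 n, μ (E i))
          = ENNReal.ofReal (QBCaux.Phi μ E n) := by
            rw [← h1, ENNReal.ofReal_toReal (hIocne n)]
        _ ≤ ENNReal.ofReal j := ENNReal.ofReal_le_ofReal (hj n).le
    have htsum : ∑' n, μ (E n) ≠ ∞ := by
      apply ne_of_lt
      rw [ENNReal.tsum_eq_iSup_sum]
      apply lt_of_le_of_lt (iSup_le fun s => ?_)
        (show (1 + ENNReal.ofReal j : ENNReal) < ∞ by finiteness)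
      obtain ⟨n, hn⟩ := s.exists_nat_subset_range
      calc ∑ i ∈ s, μ (E i) ≤ ∑ i ∈ Finset.range n, μ (E i) :=
            Finset.sum_le_sum_of_subset hn
        _ ≤ ∑ i ∈ insert 0 (Finset.Ioc 0 n), μ (E i) := by
            apply Finset.sum_le_sum_of_subset
            intro i hi
            simp only [Finset.mem_range] at hi
            simp only [Finset.mem_insert, Finset.mem_Ioc]
            omega
        _ = μ (E 0) + ∑ i ∈ Finset.Ioc 0 n, μ (E i) :=
            Finset.sum_insert (by simp)
        _ ≤ 1 + ENNReal.ofReal j := add_le_add prob_le_one (hIoc_le n)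
    filter_upwards [ae_eventually_notMem htsum] with x hx
    obtain ⟨N₀, hN₀⟩ := eventually_atTop.mp hx
    refine ⟨(N₀ : ℝ) + j, ?_⟩
    intro N hN
    rw [QBCaux.ncard_eq E x N, hphi_eq N]
    have hSSle : SS N x ≤ (N₀ : ℝ) := by
      calc SS N x ≤ ∑ n ∈ Finset.Icc 1 N, (if n < N₀ then (1:ℝ) else 0) := by
            apply Finset.sum_le_sum
            intro n _
            by_cases h : n < N₀
            · rw [if_pos h]; exact QBCaux.ind_le_one E n x
            · rw [if_neg h, Set.indicator_of_notMem (hN₀ n (by omega))]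
        _ = (((Finset.Icc 1 N).filter (· < N₀)).card : ℝ) := by
            rw [Finset.sum_boole]
        _ ≤ (N₀ : ℝ) := by
            have hsub : (Finset.Icc 1 N).filter (· < N₀) ⊆ Finset.range N₀ := by
              intro n hn
              simp only [Finset.mem_filter] at hn
              simp only [Finset.mem_range]
              exact hn.2
            have := Finset.card_le_card hsub
            simp only [Finset.card_range] at this
            exact_mod_cast this
    have hPhiN : QBCaux.Phi μ E N ≤ (j:ℝ) := (hj N).le
    have hPhi0 : 0 ≤ QBCaux.Phi μ E N := QBCaux.Phi_nonneg μ E N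
    have hT0 : 0 ≤ QBCaux.Phi μ E N ^ ((1:ℝ)/2) *
        Real.log (QBCaux.Phi μ E N + 2) ^ ((3:ℝ)/2 + ε) := by
      have h2 : (0:ℝ) ≤ Real.log (QBCaux.Phi μ E N + 2) :=
        Real.log_nonneg (by linarith)
      positivity
    have habs : |SS N x - QBCaux.Phi μ E N| ≤ (N₀ : ℝ) + j := by
      rw [abs_le]
      have hj0 : (0:ℝ) ≤ (j:ℝ) := by positivity
      have hN00 : (0:ℝ) ≤ (N₀:ℝ) := by positivity
      exact ⟨by linarith [hSSle, hPhiN, hPhi0, hSSnonneg x N],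
        by linarith [hSSle, hPhiN, hPhi0, hSSnonneg x N]⟩
    refine le_trans habs ?_
    nlinarith [hT0, hSSle, hSSnonneg x N]
  case pos =>
    -- the main, unbounded case
    set M : ℕ → ℕ := fun j => Nat.find (hbdd j) with hMdef
    have hMphi : ∀ j : ℕ, (j:ℝ) ≤ QBCaux.Phi μ E (M j) := fun j => Nat.find_spec (hbdd j)
    have hMmin : ∀ j N : ℕ, (j:ℝ) ≤ QBCaux.Phi μ E N → M j ≤ N :=
      fun j N h => Nat.find_min' (hbdd j) h
    have hMlt : ∀ j N : ℕ, QBCaux.Phi μ E N < (j:ℝ) → N < M j := by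
      intro j N h
      by_contra hle
      push_neg at hle
      exact absurd (le_trans (hMphi j) (QBCaux.Phi_mono μ E hle)) (not_le.mpr h)
    have hM0 : M 0 = 0 := by
      rw [hMdef]
      simp only [Nat.find_eq_zero]
      exact_mod_cast QBCaux.Phi_nonneg μ E 0
    have hMmono : Monotone M := by
      intro p q hpq
      exact hMmin p (M q) (le_trans (by exact_mod_cast hpq) (hMphi q))
    have hMupper : ∀ j : ℕ, QBCaux.Phi μ E (M j) ≤ (j:ℝ) + 1 := by
      intro j
      rcases Nat.eq_zero_or_pos (M j) with h0 | hpos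
      · rw [h0]
        have : QBCaux.Phi μ E 0 = 0 := by simp [QBCaux.Phi]
        rw [this]; positivity
      · obtain ⟨m, hm⟩ := Nat.exists_eq_succ_of_ne_zero hpos.ne'
        have hmlt : m < Nat.find (hbdd j) := by
          have hMj : M j = Nat.find (hbdd j) := by simp only [hMdef]
          omega
        have hmin : ¬ ((j:ℝ) ≤ QBCaux.Phi μ E m) := Nat.find_min (hbdd j) hmlt
        push_neg at hmin
        have h1 := QBCaux.Phi_succ μ E m
        have h2 := QBCaux.aa_le_one μ E (m+1)
        rw [hm]
        calc QBCaux.Phi μ E (m+1) = QBCaux.Phi μ E m + QBCaux.aa μ E (m+1) := h1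
          _ ≤ (j:ℝ) + 1 := by linarith
    -- the dyadic block sums
    set W : ℕ → ℕ → X → ℝ := fun s h x => ∑ u ∈ Finset.range (2^(s-h)),
      (QBCaux.DD μ E (M (u*2^h)) (M ((u+1)*2^h)) x)^2 with hWdef
    set Y : ℕ → X → ℝ := fun s x => ∑ h ∈ Finset.range (s+1), W s h x with hYdef
    have hWnonneg : ∀ s h x, 0 ≤ W s h x :=
      fun s h x => Finset.sum_nonneg fun u _ => sq_nonneg _
    have hYnonneg : ∀ s x, 0 ≤ Y s x :=
      fun s x => Finset.sum_nonneg fun h _ => hWnonneg s h x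
    have hYint : ∀ s, Integrable (Y s) μ := by
      intro s
      apply integrable_finset_sum
      intro h _
      apply integrable_finset_sum
      intro u _
      exact QBCaux.DDsq_int μ E hE _ _
    set K₀ : ℝ := 1 + 2 * ∑' k, C k with hK₀def
    have hK₀ : 1 ≤ K₀ := by
      have : 0 ≤ ∑' k, C k := tsum_nonneg hC0
      rw [hK₀def]; linarith
    have hEY : ∀ s : ℕ, ∫ x, Y s x ∂μ ≤ K₀ * ((s:ℝ)+1) * (2^s + 1) := by
      intro s
      have hint : ∫ x, Y s x ∂μ = ∑ h ∈ Finset.range (s+1), ∑ u ∈ Finset.range (2^(s-h)),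
          ∫ x, (QBCaux.DD μ E (M (u*2^h)) (M ((u+1)*2^h)) x)^2 ∂μ := by
        rw [hYdef]
        rw [integral_finset_sum _ (fun h _ => integrable_finset_sum _
          (fun u _ => QBCaux.DDsq_int μ E hE _ _))]
        exact Finset.sum_congr rfl fun h _ =>
          integral_finset_sum _ (fun u _ => QBCaux.DDsq_int μ E hE _ _)
      rw [hint]
      have hblocksum : ∀ h ∈ Finset.range (s+1),
          ∑ u ∈ Finset.range (2^(s-h)),
            ∫ x, (QBCaux.DD μ E (M (u*2^h)) (M ((u+1)*2^h)) x)^2 ∂μ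
          ≤ K₀ * (2^s + 1) := by
        intro h hh
        have hh' : h ≤ s := by
          simp only [Finset.mem_range] at hh; omega
        calc ∑ u ∈ Finset.range (2^(s-h)),
              ∫ x, (QBCaux.DD μ E (M (u*2^h)) (M ((u+1)*2^h)) x)^2 ∂μ
            ≤ ∑ u ∈ Finset.range (2^(s-h)),
              K₀ * (QBCaux.Phi μ E (M ((u+1)*2^h)) - QBCaux.Phi μ E (M (u*2^h))) := by
              apply Finset.sum_le_sum
              intro u _
              have hvb := QBCaux.var_bound μ E hE C hC0 hCsum hcorr
                (M (u*2^h)) (M ((u+1)*2^h))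
              rw [QBCaux.Phi_diff μ E (hMmono (Nat.mul_le_mul_right _ (Nat.le_succ u)))] at hvb
              exact hvb
          _ = K₀ * (QBCaux.Phi μ E (M (2^(s-h)*2^h)) - QBCaux.Phi μ E (M 0)) := by
              rw [← Finset.mul_sum]
              congr 1
              rw [Finset.sum_range_sub (fun u => QBCaux.Phi μ E (M (u*2^h))), zero_mul]
          _ ≤ K₀ * (2^s + 1) := by
              have he : 2^(s-h)*2^h = 2^s := by
                rw [← pow_add]
                congr 1
                omega
              rw [he, hM0]
              have h1 : QBCaux.Phi μ E (M (2^s)) ≤ ((2^s : ℕ) : ℝ) + 1 := hMupper (2^s)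
              have h2 : QBCaux.Phi μ E 0 = 0 := by simp [QBCaux.Phi]
              have h3 : ((2^s : ℕ) : ℝ) = 2^s := by push_cast; ring
              rw [h3] at h1
              have hK₀0 : (0:ℝ) ≤ K₀ := by linarith
              nlinarith
      calc ∑ h ∈ Finset.range (s+1), ∑ u ∈ Finset.range (2^(s-h)),
            ∫ x, (QBCaux.DD μ E (M (u*2^h)) (M ((u+1)*2^h)) x)^2 ∂μ
          ≤ ∑ _h ∈ Finset.range (s+1), K₀ * (2^s + 1) :=
            Finset.sum_le_sum hblocksum
        _ = K₀ * ((s:ℝ)+1) * (2^s + 1) := by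
            rw [Finset.sum_const, Finset.card_range]
            push_cast
            ring
    -- Markov inequality and Borel-Cantelli
    set lam : ℕ → ℝ := fun s => ((s:ℝ)+1)^(2+2*ε : ℝ) * 2^s with hlamdef
    have hlampos : ∀ s, 0 < lam s := by
      intro s
      simp only [hlamdef]
      have : (0:ℝ) < ((s:ℝ)+1)^(2+2*ε : ℝ) := Real.rpow_pos_of_pos (by positivity) _
      positivity
    set bb : ℕ → ℝ := fun s => 2 * K₀ * ((s:ℝ)+1)^(-(1+2*ε) : ℝ) with hbbdef
    have hbb0 : ∀ s, 0 ≤ bb s := by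
      intro s
      simp only [hbbdef]
      have : (0:ℝ) ≤ ((s:ℝ)+1)^(-(1+2*ε) : ℝ) := (Real.rpow_pos_of_pos (by positivity) _).le
      nlinarith [hK₀]
    have hmarkov : ∀ s : ℕ, (μ {x | lam s ≤ Y s x}).toReal ≤ bb s := by
      intro s
      have hm := mul_meas_ge_le_integral_of_nonneg
        (Eventually.of_forall fun x => hYnonneg s x) (hYint s) (lam s)
      have hexp : bb s * lam s = 2 * K₀ * (((s:ℝ)+1) * 2^s) := by
        rw [hbbdef, hlamdef]
        have h1 : ((s:ℝ)+1)^(-(1+2*ε) : ℝ) * ((s:ℝ)+1)^(2+2*ε : ℝ) = ((s:ℝ)+1) := by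
          rw [← Real.rpow_add (by positivity : (0:ℝ) < (s:ℝ)+1)]
          rw [show (-(1+2*ε) + (2+2*ε) : ℝ) = 1 by ring, Real.rpow_one]
        calc 2 * K₀ * ((s:ℝ)+1)^(-(1+2*ε) : ℝ) * (((s:ℝ)+1)^(2+2*ε : ℝ) * 2^s)
            = 2 * K₀ * ((((s:ℝ)+1)^(-(1+2*ε) : ℝ) * ((s:ℝ)+1)^(2+2*ε : ℝ)) * 2^s) := by
              ring
          _ = 2 * K₀ * (((s:ℝ)+1) * 2^s) := by rw [h1]
      have hchain2 : lam s * (μ {x | lam s ≤ Y s x}).toReal ≤ bb s * lam s := by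
        refine le_trans hm (le_trans (hEY s) ?_)
        rw [hexp]
        have h3 : (1:ℝ) ≤ 2^s := one_le_pow₀ (by norm_num)
        have hK₀0 : (0:ℝ) ≤ K₀ := by linarith
        have h4 : (0:ℝ) ≤ K₀ * ((s:ℝ)+1) := mul_nonneg hK₀0 (by positivity)
        calc K₀ * ((s:ℝ)+1) * (2^s+1) = (K₀*((s:ℝ)+1)) * (2^s+1) := by ring
          _ ≤ (K₀*((s:ℝ)+1)) * (2*2^s) := mul_le_mul_of_nonneg_left (by linarith) h4
          _ = 2*K₀*(((s:ℝ)+1)*2^s) := by ring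
      have h2 : (μ {x | lam s ≤ Y s x}).toReal * lam s ≤ bb s * lam s := by
        calc (μ {x | lam s ≤ Y s x}).toReal * lam s
            = lam s * (μ {x | lam s ≤ Y s x}).toReal := by ring
          _ ≤ bb s * lam s := hchain2
      exact le_of_mul_le_mul_right h2 (hlampos s)
    have hsummable : Summable bb := by
      have h1 : Summable (fun n : ℕ => (n:ℝ)^(-(1+2*ε) : ℝ)) :=
        Real.summable_nat_rpow.mpr (by linarith)
      have h2 := h1.comp_injective (add_left_injective 1)
      have h3 : (fun s : ℕ => ((s:ℝ)+1)^(-(1+2*ε) : ℝ))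
          = (fun n : ℕ => (n:ℝ)^(-(1+2*ε) : ℝ)) ∘ (· + 1) := by
        funext s
        simp only [Function.comp_apply]
        congr 1
        push_cast
        ring
      rw [hbbdef]
      apply Summable.mul_left
      rw [h3]
      exact h2
    have hBC : ∑' s : ℕ, μ {x | lam s ≤ Y s x} ≠ ∞ := by
      apply ne_of_lt
      calc ∑' s : ℕ, μ {x | lam s ≤ Y s x}
          ≤ ∑' s : ℕ, ENNReal.ofReal (bb s) := by
            apply ENNReal.tsum_le_tsum
            intro s
            rw [← ENNReal.ofReal_toReal (measure_ne_top μ _)]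
            exact ENNReal.ofReal_le_ofReal (hmarkov s)
        _ = ENNReal.ofReal (∑' s, bb s) :=
            (ENNReal.ofReal_tsum_of_nonneg hbb0 hsummable).symm
        _ < ∞ := ENNReal.ofReal_lt_top
    filter_upwards [ae_eventually_notMem hBC] with x hx
    obtain ⟨s₀, hs₀⟩ := eventually_atTop.mp hx
    have hY : ∀ s, s₀ ≤ s → Y s x ≤ lam s := by
      intro s hs
      have := hs₀ s hs
      linarith [not_le.mp this]
    -- the chaining bound, for this fixed x
    have hblock : ∀ s h u : ℕ, h ≤ s → (u+1)*2^h ≤ 2^s →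
        |QBCaux.DD μ E (M (u*2^h)) (M ((u+1)*2^h)) x| ≤ Real.sqrt (W s h x) := by
      intro s h u hh hu
      have hmem : u ∈ Finset.range (2^(s-h)) := by
        rw [Finset.mem_range]
        have h2 : (2:ℕ)^(s-h) * 2^h = 2^s := by
          rw [← pow_add]; congr 1; omega
        have h3 : (u+1) * 2^h ≤ 2^(s-h) * 2^h := by rw [h2]; exact hu
        have h4 := Nat.le_of_mul_le_mul_right h3 (Nat.two_pow_pos h)
        omega
      rw [← Real.sqrt_sq_eq_abs]
      exact Real.sqrt_le_sqrt (Finset.single_le_sum (f := fun u =>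
        (QBCaux.DD μ E (M (u*2^h)) (M ((u+1)*2^h)) x)^2)
        (fun v _ => sq_nonneg _) hmem)
    have hP : ∀ s h : ℕ, h ≤ s → ∀ t r : ℕ, r < 2^h → t*2^h + r ≤ 2^s →
        |QBCaux.DD μ E (M (t*2^h)) (M (t*2^h + r)) x|
          ≤ ∑ h' ∈ Finset.range h, Real.sqrt (W s h' x) := by
      intro s h
      induction h with
      | zero =>
        intro _ t r hr _
        have hr0 : r = 0 := by omega
        subst hr0
        simp [QBCaux.DD, Finset.Ioc_self]
      | succ h ih =>
        intro hh t r hr hle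
        have hh' : h ≤ s := by omega
        have hpow : (2:ℕ)^(h+1) = 2*2^h := by ring
        rcases lt_or_ge r (2^h) with h1 | h2
        · have e : 2*t*2^h = t*2^(h+1) := by ring
          have hbound := ih hh' (2*t) r h1 (by rw [e]; exact hle)
          rw [e] at hbound
          exact le_trans hbound (Finset.sum_le_sum_of_subset_of_nonneg
            (Finset.range_subset_range.mpr (Nat.le_succ h)) (fun _ _ _ => Real.sqrt_nonneg _))
        · have m1 : t*2^(h+1) ≤ t*2^(h+1) + 2^h := Nat.le_add_right _ _
          have m2 : t*2^(h+1) + 2^h ≤ t*2^(h+1) + r := by omega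
          have hsplit : QBCaux.DD μ E (M (t*2^(h+1))) (M (t*2^(h+1)+r)) x
              = QBCaux.DD μ E (M (t*2^(h+1))) (M (t*2^(h+1)+2^h)) x
                + QBCaux.DD μ E (M (t*2^(h+1)+2^h)) (M (t*2^(h+1)+r)) x := by
            rw [QBCaux.DD, QBCaux.DD, QBCaux.DD]
            exact (Finset.sum_Ioc_consecutive _ (hMmono m1) (hMmono m2)).symm
          have hb1 : |QBCaux.DD μ E (M (t*2^(h+1))) (M (t*2^(h+1)+2^h)) x|
              ≤ Real.sqrt (W s h x) := by
            have hup : (2*t+1)*2^h ≤ 2^s := by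
              have : (2*t+1)*2^h = t*2^(h+1) + 2^h := by ring
              omega
            have hb := hblock s h (2*t) hh' hup
            rw [show (2*t)*2^h = t*2^(h+1) by ring,
              show (2*t+1)*2^h = t*2^(h+1)+2^h by ring] at hb
            exact hb
          have hb2 : |QBCaux.DD μ E (M (t*2^(h+1)+2^h)) (M (t*2^(h+1)+r)) x|
              ≤ ∑ h' ∈ Finset.range h, Real.sqrt (W s h' x) := by
            have e2 : (2*t+1)*2^h = t*2^(h+1) + 2^h := by ring
            have hbound := ih hh' (2*t+1) (r - 2^h) (by omega)
              (by rw [e2]; omega)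
            rw [e2, show t*2^(h+1) + 2^h + (r - 2^h) = t*2^(h+1) + r by omega] at hbound
            exact hbound
          calc |QBCaux.DD μ E (M (t*2^(h+1))) (M (t*2^(h+1)+r)) x|
              ≤ |QBCaux.DD μ E (M (t*2^(h+1))) (M (t*2^(h+1)+2^h)) x|
                + |QBCaux.DD μ E (M (t*2^(h+1)+2^h)) (M (t*2^(h+1)+r)) x| := by
                rw [hsplit]; exact abs_add_le _ _
            _ ≤ Real.sqrt (W s h x) + ∑ h' ∈ Finset.range h, Real.sqrt (W s h' x) :=
                add_le_add hb1 hb2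
            _ = ∑ h' ∈ Finset.range (h+1), Real.sqrt (W s h' x) := by
                rw [Finset.sum_range_succ]; ring
    have hchain : ∀ s j : ℕ, j ≤ 2^s →
        |QBCaux.DD μ E 0 (M j) x| ≤ ∑ h ∈ Finset.range (s+1), Real.sqrt (W s h x) := by
      intro s j hj
      rcases eq_or_lt_of_le hj with heq | hlt
      · subst heq
        have hb := hblock s s 0 le_rfl (by simp)
        rw [zero_mul, hM0, show (0+1)*2^s = 2^s by ring] at hb
        exact le_trans hb (Finset.single_le_sum (f := fun h => Real.sqrt (W s h x))
          (fun h _ => Real.sqrt_nonneg _) (Finset.self_mem_range_succ s))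
      · have hb := hP s s le_rfl 0 j hlt (by simpa using hlt.le)
        rw [zero_mul, zero_add, hM0] at hb
        exact le_trans hb (Finset.sum_le_sum_of_subset_of_nonneg
          (Finset.range_subset_range.mpr (Nat.le_succ s)) (fun _ _ _ => Real.sqrt_nonneg _))
    have hCS : ∀ s : ℕ, (∑ h ∈ Finset.range (s+1), Real.sqrt (W s h x))
        ≤ Real.sqrt (((s:ℝ)+1) * Y s x) := by
      intro s
      have hnn : 0 ≤ ∑ h ∈ Finset.range (s+1), Real.sqrt (W s h x) :=
        Finset.sum_nonneg fun h _ => Real.sqrt_nonneg _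
      have hsq : (∑ h ∈ Finset.range (s+1), Real.sqrt (W s h x))^2
          ≤ ((s:ℝ)+1) * Y s x := by
        have hcs := Finset.sum_mul_sq_le_sq_mul_sq (Finset.range (s+1))
          (fun _ => (1:ℝ)) (fun h => Real.sqrt (W s h x))
        simp only [one_mul, one_pow] at hcs
        have h1 : ∑ h ∈ Finset.range (s+1), (1:ℝ) = (s:ℝ)+1 := by
          rw [Finset.sum_const, Finset.card_range]
          push_cast; ring
        have h2 : ∑ h ∈ Finset.range (s+1), Real.sqrt (W s h x)^2 = Y s x := by
          rw [hYdef]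
          exact Finset.sum_congr rfl fun h _ => Real.sq_sqrt (hWnonneg s h x)
        rw [h1, h2] at hcs
        exact hcs
      calc ∑ h ∈ Finset.range (s+1), Real.sqrt (W s h x)
          = Real.sqrt ((∑ h ∈ Finset.range (s+1), Real.sqrt (W s h x))^2) :=
            (Real.sqrt_sq hnn).symm
        _ ≤ Real.sqrt (((s:ℝ)+1) * Y s x) := Real.sqrt_le_sqrt hsq
    -- now produce the constant K
    set jbig : ℕ := 2^s₀ + 1 with hjbigdef
    set N₁ : ℕ := M jbig with hN₁def
    set c : ℝ := (4 / Real.log 2)^((3:ℝ)/2+ε) with hcdef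
    have hc0 : 0 ≤ c := by
      rw [hcdef]
      positivity
    set K₃ : ℝ := 2*c + 2 with hK₃def
    set K₂ : ℝ := SS N₁ x + QBCaux.Phi μ E N₁ with hK₂def
    have hK₂0 : 0 ≤ K₂ := by
      rw [hK₂def]
      have := hSSnonneg x N₁
      have := QBCaux.Phi_nonneg μ E N₁
      linarith
    refine ⟨max K₂ K₃, ?_⟩
    intro N hN
    rw [QBCaux.ncard_eq E x N, hphi_eq N]
    set Φ : ℝ := QBCaux.Phi μ E N with hΦdef
    have hΦ0 : 0 ≤ Φ := QBCaux.Phi_nonneg μ E N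
    set T : ℝ := Φ^((1:ℝ)/2) * Real.log (Φ+2)^((3:ℝ)/2+ε) with hTdef
    have hT0 : 0 ≤ T := by
      rw [hTdef]
      have h2 : (0:ℝ) ≤ Real.log (Φ + 2) := Real.log_nonneg (by linarith)
      positivity
    have hmaxK : 0 ≤ max K₂ K₃ := le_trans hK₂0 (le_max_left _ _)
    rcases lt_or_ge Φ (jbig : ℝ) with hsmall | hbig
    · -- small N : brutal bound
      have hNlt : N < N₁ := hMlt jbig N hsmall
      have habs : |SS N x - Φ| ≤ K₂ := by
        rw [abs_le]
        have h1 := hSSmono x hNlt.le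
        have h2 : Φ ≤ QBCaux.Phi μ E N₁ := QBCaux.Phi_mono μ E hNlt.le
        have h3 := hSSnonneg x N
        have h4 := QBCaux.Phi_nonneg μ E N₁
        have h5 := hSSnonneg x N₁
        rw [hK₂def]
        exact ⟨by linarith, by linarith⟩
      calc |SS N x - Φ| ≤ K₂ := habs
        _ ≤ max K₂ K₃ := le_max_left _ _
        _ ≤ max K₂ K₃ * (T + 1) := by nlinarith [hT0, hmaxK]
    · -- large N : the chaining estimate
      set j : ℕ := ⌊Φ⌋₊ with hjdef
      have hj1 : (j:ℝ) ≤ Φ := Nat.floor_le hΦ0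
      have hj2 : Φ < (j:ℝ)+1 := Nat.lt_floor_add_one Φ
      have hjge : jbig ≤ j := Nat.le_floor hbig
      have hjbig2 : 2 ≤ jbig := by
        rw [hjbigdef]
        have : 1 ≤ 2^s₀ := Nat.one_le_two_pow
        omega
      set s : ℕ := Nat.clog 2 (j+1) with hsdef
      have hs1 : j+1 ≤ 2^s := Nat.le_pow_clog one_lt_two _
      have hspos : 1 ≤ s := by
        by_contra hs0
        push_neg at hs0
        have : s = 0 := by omega
        rw [this] at hs1
        simp at hs1
        omega
      have hs2 : 2^s ≤ 2*j := by
        have hpred : 2^(s-1) < j+1 := Nat.pow_pred_clog_lt_self one_lt_two (by omega)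
        have h2s : (2:ℕ)^s = 2^(s-1) * 2 := by
          conv_lhs => rw [show s = (s-1)+1 by omega]
          rw [pow_succ]
        omega
      have hs₀s : s₀ ≤ s := by
        have h1 : (2:ℕ)^s₀ < 2^s := by
          calc (2:ℕ)^s₀ < jbig := by rw [hjbigdef]; omega
            _ ≤ j := hjge
            _ < j+1 := by omega
            _ ≤ 2^s := hs1
        exact le_of_lt ((Nat.pow_lt_pow_iff_right (by norm_num)).mp h1)
      have hYs : Y s x ≤ lam s := hY s hs₀s
      have hQb : ∀ jj : ℕ, jj ≤ 2^s → |QBCaux.DD μ E 0 (M jj) x|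
          ≤ Real.sqrt (((s:ℝ)+1) * lam s) := by
        intro jj hjj
        refine le_trans (hchain s jj hjj) (le_trans (hCS s) (Real.sqrt_le_sqrt ?_))
        have hsp : (0:ℝ) ≤ (s:ℝ)+1 := by positivity
        exact mul_le_mul_of_nonneg_left hYs hsp
      have hq1 := hQb j (by omega)
      have hq2 := hQb (j+1) hs1
      set Q : ℝ := Real.sqrt (((s:ℝ)+1) * lam s) with hQdef
      have hMjN : M j ≤ N := hMmin j N hj1
      have hNMj1 : N < M (j+1) := hMlt (j+1) N (by push_cast; linarith)
      have hl : SS (M j) x ≤ SS N x := hSSmono x hMjN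
      have hu : SS N x ≤ SS (M (j+1)) x := hSSmono x hNMj1.le
      have heq1 : SS (M j) x = QBCaux.DD μ E 0 (M j) x + QBCaux.Phi μ E (M j) := by
        rw [hDD0 x (M j)]; ring
      have heq2 : SS (M (j+1)) x
          = QBCaux.DD μ E 0 (M (j+1)) x + QBCaux.Phi μ E (M (j+1)) := by
        rw [hDD0 x (M (j+1))]; ring
      have hg1 : (j:ℝ) ≤ QBCaux.Phi μ E (M j) := hMphi j
      have hg2 : QBCaux.Phi μ E (M (j+1)) ≤ ((j:ℝ)+1)+1 := by
        have := hMupper (j+1)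
        push_cast at this ⊢
        linarith
      have habs : |SS N x - Φ| ≤ Q + 2 := by
        rw [abs_le]
        have hn1 := neg_abs_le (QBCaux.DD μ E 0 (M j) x)
        have hn2 := le_abs_self (QBCaux.DD μ E 0 (M (j+1)) x)
        exact ⟨by linarith, by linarith⟩
      have hfinal : Q + 2 ≤ K₃ * (T + 1) := by
        have hjj1 : 1 ≤ j := by omega
        have hs2r : (2:ℝ)^s ≤ 2*(j:ℝ) := by exact_mod_cast hs2
        have hfa := QBCaux.final_arith ε hε s j Φ hjj1 hj1 hs2r
        simp only [hQdef, hlamdef, hK₃def, hcdef, hTdef]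
        exact hfa
      calc |SS N x - Φ| ≤ Q + 2 := habs
        _ ≤ K₃ * (T+1) := hfinal
        _ ≤ max K₂ K₃ * (T+1) := by
            apply mul_le_mul_of_nonneg_right (le_max_right _ _)
            linarith
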